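/- arXiv:2601.12988 — 5 statements merged into one kernel-verified Lean document; each statement's English description precedes it below -/
import Mathlib

section
/- Theorem 3.2, Part 1 (Relative Advantage, failed solutions): Under the reward structure above, for every index i with r^sol_i = 0, the standardized advantages satisfy Â_i(r^sol) ≤ Â_i(r^draft). -/
open Finset

/-- Population mean of a vector `r : Fin n → ℝ`. -/
noncomputable def mean {n : ℕ} (r : Fin n → ℝ) : ℝ := (∑ i, r i) / n

/-- Population variance of a vector `r : Fin n → ℝ`. -/
noncomputable def pvar {n : ℕ} (r : Fin n → ℝ) : ℝ := (∑ i, (r i - mean r) ^ 2) / n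

/-- Population standard deviation. -/
noncomputable def pstd {n : ℕ} (r : Fin n → ℝ) : ℝ := Real.sqrt (pvar r)

/-- Coefficient of variation. -/
noncomputable def cv {n : ℕ} (r : Fin n → ℝ) : ℝ := pstd r / mean r

/-- Standardized (group-relative) advantage of the `i`-th entry. -/
noncomputable def adv {n : ℕ} (r : Fin n → ℝ) (i : Fin n) : ℝ := (r i - mean r) / pstd r

lemma pvar_nonneg {n : ℕ} (r : Fin n → ℝ) : 0 ≤ pvar r := by
  unfold pvar
  apply div_nonneg
  · exact Finset.sum_nonneg fun k _ => sq_nonneg _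
  · positivity

lemma pvar_pos {n : ℕ} (r : Fin n → ℝ) (i : Fin n) (h : r i ≠ mean r) :
    0 < pvar r := by
  have hn : (0:ℝ) < n := by
    have : 0 < n := Fin.pos i
    exact_mod_cast this
  unfold pvar
  apply div_pos _ hn
  have h1 : 0 < (r i - mean r) ^ 2 := by
    have := sub_ne_zero.mpr h
    positivity
  calc 0 < (r i - mean r) ^ 2 := h1
    _ ≤ ∑ k, (r k - mean r) ^ 2 :=
      Finset.single_le_sum (f := fun k => (r k - mean r) ^ 2)
        (fun k _ => sq_nonneg _) (mem_univ i)

lemma pvar_eq {n : ℕ} (hn : 0 < n) (r : Fin n → ℝ) :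
    pvar r = (∑ k, r k ^ 2) / n - mean r ^ 2 := by
  have hnR : (0:ℝ) < n := by exact_mod_cast hn
  have hsum : ∑ k, r k = n * mean r := by
    unfold mean; field_simp
  unfold pvar
  have : ∑ k, (r k - mean r) ^ 2
      = (∑ k, r k ^ 2) - 2 * mean r * (∑ k, r k) + n * mean r ^ 2 := by
    simp only [sub_sq]
    rw [Finset.sum_add_distrib, Finset.sum_sub_distrib, ← Finset.sum_mul,
      ← Finset.mul_sum, Finset.sum_const, Finset.card_univ, Fintype.card_fin, nsmul_eq_mul]
    ring
  rw [this, hsum]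
  field_simp
  ring

/-- Theorem 3.2, Part 1 (Relative Advantage, failed solutions):
for every index `i` with `rsol i = 0`, `adv rsol i ≤ adv rdraft i`. -/
theorem stmt_0 {n : ℕ} (hn : 1 ≤ n) (rsol ρ rdraft : Fin n → ℝ)
    (hsol : ∀ i, rsol i = 0 ∨ rsol i = 1)
    (hρ : ∀ i, 0 ≤ ρ i ∧ ρ i ≤ 1)
    (hdraft : ∀ i, rdraft i = ρ i * rsol i)
    (hn1 : 1 ≤ (Finset.univ.filter (fun i => rsol i = 1)).card)
    (hn0 : 1 ≤ (Finset.univ.filter (fun i => rsol i = 0)).card)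
    (hj : ∃ j, rsol j = 1 ∧ 0 < ρ j)
    (i : Fin n) (hi : rsol i = 0) :
    adv rsol i ≤ adv rdraft i := by
  have hnpos : 0 < n := hn
  have hnR : (0:ℝ) < n := by exact_mod_cast hn
  obtain ⟨j, hj1, hjρ⟩ := hj
  have hsnn : ∀ k, (0:ℝ) ≤ rsol k := fun k => by rcases hsol k with h|h <;> simp [h]
  have hdnn : ∀ k, (0:ℝ) ≤ rdraft k := fun k => by
    rw [hdraft]; exact mul_nonneg (hρ k).1 (hsnn k)
  have hdi : rdraft i = 0 := by rw [hdraft, hi, mul_zero]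
  -- means
  have hμs_pos : 0 < mean rsol := by
    unfold mean
    apply div_pos _ hnR
    calc (0:ℝ) < 1 := one_pos
      _ = rsol j := hj1.symm
      _ ≤ ∑ k, rsol k := Finset.single_le_sum (fun k _ => hsnn k) (mem_univ j)
  have hμd_pos : 0 < mean rdraft := by
    unfold mean
    apply div_pos _ hnR
    calc (0:ℝ) < ρ j := hjρ
      _ = rdraft j := by rw [hdraft, hj1, mul_one]
      _ ≤ ∑ k, rdraft k := Finset.single_le_sum (fun k _ => hdnn k) (mem_univ j)
  -- std positivity
  have hvs_pos : 0 < pvar rsol := pvar_pos rsol i (by rw [hi]; exact (ne_of_lt hμs_pos))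
  have hvd_pos : 0 < pvar rdraft := pvar_pos rdraft i (by rw [hdi]; exact (ne_of_lt hμd_pos))
  have hσs_pos : 0 < pstd rsol := Real.sqrt_pos.mpr hvs_pos
  have hσd_pos : 0 < pstd rdraft := Real.sqrt_pos.mpr hvd_pos
  have hσs_sq : pstd rsol ^ 2 = pvar rsol := Real.sq_sqrt hvs_pos.le
  have hσd_sq : pstd rdraft ^ 2 = pvar rdraft := Real.sq_sqrt hvd_pos.le
  -- sum identities
  have hsq_s : ∑ k, rsol k ^ 2 = ∑ k, rsol k := by
    apply Finset.sum_congr rfl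
    intro k _
    rcases hsol k with h|h <;> simp [h]
  have hmix : ∑ k, rsol k * rdraft k = ∑ k, rdraft k := by
    apply Finset.sum_congr rfl
    intro k _
    rcases hsol k with h|h
    · rw [hdraft, h]; ring
    · rw [h, one_mul]
  -- Cauchy-Schwarz
  have hCS : (∑ k, rsol k * rdraft k) ^ 2
      ≤ (∑ k, rsol k ^ 2) * ∑ k, rdraft k ^ 2 :=
    Finset.sum_mul_sq_le_sq_mul_sq _ _ _
  rw [hmix, hsq_s] at hCS
  -- key: μd^2 ≤ μs * m2d
  have hkey : mean rdraft ^ 2 ≤ mean rsol * ((∑ k, rdraft k ^ 2) / n) := by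
    unfold mean
    rw [div_pow, div_mul_div_comm, show ((n:ℝ) * n) = (n:ℝ) ^ 2 from by ring]
    gcongr
    all_goals first | exact hCS | positivity
  have hvs_eq : pvar rsol = mean rsol - mean rsol ^ 2 := by
    rw [pvar_eq hnpos, hsq_s]; rfl
  have hvd_eq : pvar rdraft = (∑ k, rdraft k ^ 2) / n - mean rdraft ^ 2 :=
    pvar_eq hnpos rdraft
  -- main inequality: μd * σs ≤ μs * σd
  have hmain : mean rdraft * pstd rsol ≤ mean rsol * pstd rdraft := by
    have hsq : (mean rdraft * pstd rsol) ^ 2 ≤ (mean rsol * pstd rdraft) ^ 2 := by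
      rw [mul_pow, mul_pow, hσs_sq, hσd_sq, hvs_eq, hvd_eq]
      nlinarith [hkey, hμs_pos, hμd_pos, sq_nonneg (mean rdraft)]
    nlinarith [hsq, mul_pos hμd_pos hσs_pos, mul_pos hμs_pos hσd_pos]
  unfold adv
  rw [hi, hdi, div_le_div_iff₀ hσs_pos hσd_pos]
  nlinarith [hmain]
end

section
/- Theorem 3.2, Part 2 (Relative Advantage, successful solutions after below-average drafts): Under the reward structure above, for every index i with r^sol_i = 1 and r^draft_i ≤ mean(r^draft), the standardized advantages satisfy Â_i(r^draft) ≤ Â_i(r^sol). -/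
open Finset

/-- Theorem 3.2, Part 2 (successful solutions after below-average drafts):
for every index `i` with `rsol i = 1` and `rdraft i ≤ mean rdraft`,
`adv rdraft i ≤ adv rsol i`. -/
theorem stmt_1 {n : ℕ} (hn : 1 ≤ n) (rsol ρ rdraft : Fin n → ℝ)
    (hsol : ∀ i, rsol i = 0 ∨ rsol i = 1)
    (hρ : ∀ i, 0 ≤ ρ i ∧ ρ i ≤ 1)
    (hdraft : ∀ i, rdraft i = ρ i * rsol i)
    (hn1 : 1 ≤ (Finset.univ.filter (fun i => rsol i = 1)).card)
    (hn0 : 1 ≤ (Finset.univ.filter (fun i => rsol i = 0)).card)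
    (hj : ∃ j, rsol j = 1 ∧ 0 < ρ j)
    (i : Fin n) (hi : rsol i = 1) (hbelow : rdraft i ≤ mean rdraft) :
    adv rdraft i ≤ adv rsol i := by
  have h1 : adv rdraft i ≤ 0 := by
    apply div_nonpos_of_nonpos_of_nonneg
    · linarith
    · exact Real.sqrt_nonneg _
  have h2 : 0 ≤ adv rsol i := by
    apply div_nonneg _ (Real.sqrt_nonneg _)
    have hmean : mean rsol ≤ 1 := by
      unfold mean
      rw [div_le_one (by exact_mod_cast hn)]
      calc (∑ j, rsol j) ≤ ∑ _j : Fin n, (1:ℝ) := by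
            apply Finset.sum_le_sum
            intro j _
            rcases hsol j with h | h <;> simp [h]
        _ = n := by simp
    linarith [hi ▸ hmean]
  linarith
end

section
/- Theorem 3.2, Part 3 (Relative Advantage, best draft): Under the reward structure above, let i_max be an index such that r^draft_{i_max} = max_{1 ≤ i ≤ n} r^draft_i. If r^sol_{i_max} = 1, then the standardized advantages satisfy Â_{i_max}(r^sol) ≤ Â_{i_max}(r^draft). -/
open Finset

lemma sum_eq_n_mean {n : ℕ} (hn : 1 ≤ n) (r : Fin n → ℝ) :
    (∑ i, r i) = (n : ℝ) * mean r := by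
  have hN : (0:ℝ) < n := by exact_mod_cast hn
  rw [mean]; field_simp [hN.ne']

lemma sum_sq_dev {n : ℕ} (hn : 1 ≤ n) (r : Fin n → ℝ) :
    (∑ i, (r i - mean r) ^ 2) = (∑ i, (r i) ^ 2) - (n : ℝ) * (mean r) ^ 2 := by
  have h := sum_eq_n_mean hn r
  have expand : (∑ i, (r i - mean r) ^ 2)
      = ∑ i, ((r i)^2 - 2 * mean r * r i + (mean r)^2) := by
    apply Finset.sum_congr rfl
    intro i _
    ring
  have : (∑ i, (r i - mean r) ^ 2)
      = (∑ i, (r i)^2) - 2 * mean r * (∑ i, r i) + (n:ℝ) * (mean r)^2 := by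
    rw [expand, Finset.sum_add_distrib, Finset.sum_sub_distrib, ← Finset.mul_sum,
      Finset.sum_const, Finset.card_univ, Fintype.card_fin, nsmul_eq_mul]
  rw [this, h]; ring

set_option maxHeartbeats 1000000 in
/-- Theorem 3.2, Part 3 (best draft): if `imax` attains the maximum of `rdraft`
and `rsol imax = 1`, then `adv rsol imax ≤ adv rdraft imax`. -/
theorem stmt_2 {n : ℕ} (hn : 1 ≤ n) (rsol ρ rdraft : Fin n → ℝ)
    (hsol : ∀ i, rsol i = 0 ∨ rsol i = 1)
    (hρ : ∀ i, 0 ≤ ρ i ∧ ρ i ≤ 1)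
    (hdraft : ∀ i, rdraft i = ρ i * rsol i)
    (hn1 : 1 ≤ (Finset.univ.filter (fun i => rsol i = 1)).card)
    (hn0 : 1 ≤ (Finset.univ.filter (fun i => rsol i = 0)).card)
    (hj : ∃ j, rsol j = 1 ∧ 0 < ρ j)
    (imax : Fin n) (hmax : ∀ i, rdraft i ≤ rdraft imax)
    (hi : rsol imax = 1) :
    adv rsol imax ≤ adv rdraft imax := by
  obtain ⟨j, hj1, hjρ⟩ := hj
  have hN : (0:ℝ) < n := by exact_mod_cast hn
  set S1 := Finset.univ.filter (fun i => rsol i = 1) with hS1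
  set S0 := Finset.univ.filter (fun i => rsol i = 0) with hS0
  set n1 : ℝ := (S1.card : ℝ) with hn1def
  set n0 : ℝ := (S0.card : ℝ) with hn0def
  have hn1pos : (0:ℝ) < n1 := by
    have : (1:ℝ) ≤ n1 := by rw [hn1def]; exact_mod_cast hn1
    linarith
  have hn0pos : (0:ℝ) < n0 := by
    have : (1:ℝ) ≤ n0 := by rw [hn0def]; exact_mod_cast hn0
    linarith
  -- card split
  have hcards : n1 + n0 = (n : ℝ) := by
    have : S0 = Finset.univ.filter (fun i => ¬ rsol i = 1) := by
      apply Finset.filter_congr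
      intro i _
      rcases hsol i with h | h <;> simp [h]
    rw [hn1def, hn0def, this]
    have h2 := Finset.card_filter_add_card_filter_not
      (s := (Finset.univ : Finset (Fin n))) (p := fun i => rsol i = 1)
    rw [Finset.card_univ, Fintype.card_fin] at h2
    exact_mod_cast h2
  -- sum of rsol
  have hsum_sol : (∑ i, rsol i) = n1 := by
    rw [← Finset.sum_filter_add_sum_filter_not Finset.univ (fun i => rsol i = 1)]
    have h2 : (∑ i ∈ Finset.univ.filter (fun i => ¬ rsol i = 1), rsol i) = 0 := by
      apply Finset.sum_eq_zero
      intro i hi'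
      rcases hsol i with h | h
      · exact h
      · simp [h] at hi'
    have h1 : (∑ i ∈ S1, rsol i) = n1 := by
      rw [Finset.sum_congr rfl (fun i hi' => (Finset.mem_filter.mp hi').2)]
      simp [hn1def, hS1]
    rw [h2, h1, add_zero]
  have hsumsq_sol : (∑ i, (rsol i) ^ 2) = n1 := by
    rw [← hsum_sol]
    apply Finset.sum_congr rfl
    intro i _
    rcases hsol i with h | h <;> simp [h]
  -- mean of rsol
  set p : ℝ := n1 / n with hp
  have hmean_sol : mean rsol = p := by rw [mean, hsum_sol]
  have hppos : 0 < p := by positivity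
  have h1p : 0 < 1 - p := by
    have : p = n1 / n := hp
    rw [hp]
    rw [sub_pos, div_lt_one hN]
    nlinarith
  -- variance of rsol
  have hvar_sol : pvar rsol = p * (1 - p) := by
    rw [pvar, sum_sq_dev hn, hsumsq_sol, hmean_sol]
    field_simp [hp]
    rw [hp]; field_simp
  -- draft facts
  have hdnonneg : ∀ i, 0 ≤ rdraft i := by
    intro i
    rw [hdraft i]
    rcases hsol i with h | h <;> simp [h, (hρ i).1]
  set M : ℝ := rdraft imax with hM
  have hdle : ∀ i, rdraft i ≤ M := hmax
  have hMpos : 0 < M := by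
    have := hmax j
    have : 0 < rdraft j := by rw [hdraft j, hj1]; simpa using hjρ
    linarith [hmax j]
  set m : ℝ := mean rdraft with hm
  have hsum_d : (∑ i, rdraft i) = (n : ℝ) * m := sum_eq_n_mean hn rdraft
  have hmpos : 0 < m := by
    have hterm : 0 < rdraft j := by rw [hdraft j, hj1]; simpa using hjρ
    have : 0 < ∑ i, rdraft i :=
      lt_of_lt_of_le hterm (Finset.single_le_sum (fun i _ => hdnonneg i) (Finset.mem_univ j))
    rw [hsum_d] at this
    nlinarith
  -- sum d ≤ n1 * M
  have hsum_le : (n : ℝ) * m ≤ n1 * M := by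
    rw [← hsum_d]
    rw [← Finset.sum_filter_add_sum_filter_not Finset.univ (fun i => rsol i = 1)]
    have h2 : (∑ i ∈ Finset.univ.filter (fun i => ¬ rsol i = 1), rdraft i) = 0 := by
      apply Finset.sum_eq_zero
      intro i hi'
      rcases hsol i with h | h
      · rw [hdraft i, h, mul_zero]
      · simp [h] at hi'
    rw [h2, add_zero]
    calc (∑ i ∈ S1, rdraft i) ≤ ∑ i ∈ S1, M := Finset.sum_le_sum (fun i _ => hdle i)
    _ = n1 * M := by rw [Finset.sum_const, nsmul_eq_mul]
  -- variance of draft upper bound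
  have hsumsq_d : (∑ i, (rdraft i) ^ 2) ≤ M * ((n:ℝ) * m) := by
    rw [← hsum_d, Finset.mul_sum]
    apply Finset.sum_le_sum
    intro i _
    have := hdnonneg i
    have := hdle i
    nlinarith
  have hvar_d_le : pvar rdraft ≤ m * (M - m) := by
    rw [pvar, sum_sq_dev hn, ← hm]
    rw [div_le_iff₀ hN]
    nlinarith
  -- variance of draft positive
  have hvar_d_pos : 0 < pvar rdraft := by
    obtain ⟨i0, hi0⟩ := Finset.card_pos.mp (lt_of_lt_of_le Nat.zero_lt_one hn0)
    have hi0' : rsol i0 = 0 := (Finset.mem_filter.mp hi0).2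
    have hd0 : rdraft i0 = 0 := by rw [hdraft i0, hi0', mul_zero]
    have hterm : m ^ 2 ≤ ∑ i, (rdraft i - mean rdraft) ^ 2 := by
      have : (rdraft i0 - mean rdraft) ^ 2 = m ^ 2 := by rw [hd0, ← hm]; ring
      rw [← this]
      exact Finset.single_le_sum (f := fun i => (rdraft i - mean rdraft)^2)
        (fun i _ => sq_nonneg _) (Finset.mem_univ i0)
    have hm2 : 0 < m ^ 2 := by positivity
    rw [pvar]
    exact div_pos (lt_of_lt_of_le hm2 hterm) hN
  have hMm : 0 < M - m := by
    have h := lt_of_lt_of_le hvar_d_pos hvar_d_le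
    rcases mul_pos_iff.mp h with ⟨_, h2⟩ | ⟨h1, _⟩
    · exact h2
    · linarith
  -- key comparison : (1-p) * m ≤ p * (M - m)
  have hkey : (1 - p) * m ≤ p * (M - m) := by
    have : m ≤ p * M := by
      rw [hp, div_mul_eq_mul_div, le_div_iff₀ hN]
      linarith [hsum_le]
    linarith
  -- assemble
  have hstd_s : pstd rsol = Real.sqrt (p * (1 - p)) := by rw [pstd, hvar_sol]
  have hstd_s_pos : 0 < pstd rsol := by
    rw [hstd_s]; positivity
  have hstd_d_pos : 0 < pstd rdraft := Real.sqrt_pos.mpr hvar_d_pos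
  have hsq_d : (pstd rdraft) ^ 2 = pvar rdraft := Real.sq_sqrt (le_of_lt hvar_d_pos)
  have hsq_s : (pstd rsol) ^ 2 = p * (1 - p) := by
    rw [hstd_s, Real.sq_sqrt]; positivity
  rw [adv, adv, hi, hmean_sol, ← hm, ← hM]
  rw [div_le_div_iff₀ hstd_s_pos hstd_d_pos]
  have hsq : ((1 - p) * pstd rdraft) ^ 2 ≤ ((M - m) * pstd rsol) ^ 2 := by
    rw [mul_pow, mul_pow, hsq_d, hsq_s]
    nlinarith [mul_le_mul_of_nonneg_left hvar_d_le (sq_nonneg (1 - p)),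
      mul_le_mul_of_nonneg_left hkey (mul_nonneg h1p.le hMm.le)]
  have hA : 0 ≤ (1 - p) * pstd rdraft := mul_nonneg h1p.le hstd_d_pos.le
  have hB : 0 ≤ (M - m) * pstd rsol := mul_nonneg hMm.le hstd_s_pos.le
  nlinarith [hsq, hA, hB]
end

section
/- Key estimate in the proof of Theorem 3.2, Part 3: Let n ≥ 1 and let r : Fin n → ℝ satisfy r_i ≥ 0 for all i, with mean(r) > 0 and Var(r) > 0. Let M = max_{1 ≤ i ≤ n} r_i. Then the squared standardized advantage of the maximal entry satisfies ((M − mean(r))/std(r))² ≥ M/mean(r) − 1. -/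
open Finset

/-- Key estimate in the proof of Theorem 3.2, Part 3: with `M = max_i r i`,
`((M − mean r)/std r)² ≥ M/mean r − 1`. -/
theorem stmt_8 {n : ℕ} (hn : 1 ≤ n) (r : Fin n → ℝ)
    (hr : ∀ i, 0 ≤ r i) (hmean : 0 < mean r) (hvar : 0 < pvar r)
    (M : ℝ) (hub : ∀ i, r i ≤ M) (hmem : ∃ i, r i = M) :
    ((M - mean r) / pstd r) ^ 2 ≥ M / mean r - 1 := by
  have hn' : (0:ℝ) < n := by exact_mod_cast Nat.lt_of_lt_of_le Nat.zero_lt_one hn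
  set μ := mean r with hμ
  have hsum : ∑ i, r i = n * μ := by
    rw [hμ, mean]; field_simp
  -- Var ≤ μ (M - μ)
  have hkey : ∑ i, (r i - μ) ^ 2 ≤ n * (μ * (M - μ)) := by
    have h1 : ∑ i, (r i - μ) ^ 2 = (∑ i, r i ^ 2) - n * μ ^ 2 := by
      have : ∀ i : Fin n, (r i - μ) ^ 2 = r i ^ 2 - 2 * μ * r i + μ ^ 2 := by
        intro i; ring
      rw [Finset.sum_congr rfl (fun i _ => this i)]
      rw [Finset.sum_add_distrib, Finset.sum_sub_distrib, ← Finset.mul_sum, hsum,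
        Finset.sum_const, Finset.card_univ, Fintype.card_fin, nsmul_eq_mul]
      ring
    have h2 : ∑ i, r i ^ 2 ≤ ∑ i, M * r i := by
      apply Finset.sum_le_sum
      intro i _
      have := mul_le_mul_of_nonneg_right (hub i) (hr i)
      nlinarith [this]
    have h3 : ∑ i, M * r i = n * (M * μ) := by
      rw [← Finset.mul_sum, hsum]; ring
    nlinarith
  have hVle : pvar r ≤ μ * (M - μ) := by
    rw [pvar]
    rw [div_le_iff₀ hn']
    calc ∑ i, (r i - mean r) ^ 2 ≤ n * (μ * (M - μ)) := hkey
      _ = μ * (M - μ) * n := by ring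
  have hMμ : 0 < M - μ := by nlinarith
  have hstd : pstd r ^ 2 = pvar r := Real.sq_sqrt hvar.le
  have hdivsq : ((M - μ) / pstd r) ^ 2 = (M - μ) ^ 2 / pvar r := by
    rw [div_pow, hstd]
  rw [hdivsq]
  have h4 : (M - μ) ^ 2 / pvar r ≥ (M - μ) ^ 2 / (μ * (M - μ)) := by
    apply div_le_div_of_nonneg_left (by positivity) hvar hVle
  have h5 : (M - μ) ^ 2 / (μ * (M - μ)) = M / μ - 1 := by
    field_simp
  linarith [h4, h5.symm.le, h5.le]
end

section
/- Per-token surrogate bound under negative sample masking (Appendix B.1, inequality J_DFPO-off ≤ J_surrogate): Let ρ > 0 be a real number, let 0 < ε < 1, and let A_d, A_s be real numbers satisfying the negative-sample-masking condition: if A_s ≤ 0 then A_d = A_s. Then min(ρ·A_d, clip(ρ, 1−ε, 1+ε)·A_d) ≤ min(ρ·A_s, clip(ρ, 1−ε, 1+ε)·A_s) + min(ρ, clip(ρ, 1−ε, 1+ε))·max(A_d − A_s, 0). -/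
/-- `clip x a b = max a (min x b)`, the PPO-style clipping operation. -/
noncomputable def clip (x a b : ℝ) : ℝ := max a (min x b)

/-- Per-token surrogate bound under negative sample masking (Appendix B.1):
if `A_s ≤ 0 → A_d = A_s`, then
`min(ρ·A_d, clip(ρ,1−ε,1+ε)·A_d) ≤
  min(ρ·A_s, clip(ρ,1−ε,1+ε)·A_s) + min(ρ, clip(ρ,1−ε,1+ε))·max(A_d − A_s, 0)`. -/
theorem stmt_12 (ρ ε Ad As : ℝ) (hρ : 0 < ρ) (hε0 : 0 < ε) (hε1 : ε < 1)
    (hmask : As ≤ 0 → Ad = As) :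
    min (ρ * Ad) (clip ρ (1 - ε) (1 + ε) * Ad) ≤
      min (ρ * As) (clip ρ (1 - ε) (1 + ε) * As) +
        min ρ (clip ρ (1 - ε) (1 + ε)) * max (Ad - As) 0 := by
  set c := clip ρ (1 - ε) (1 + ε) with hc
  have hcpos : 0 < c := lt_of_lt_of_le (by linarith) (le_max_left _ _)
  have hmpos : 0 < min ρ c := lt_min hρ hcpos
  by_cases hAs : As ≤ 0
  · have h := hmask hAs
    subst h
    simp [max_eq_right (le_refl (0:ℝ))]
  · push_neg at hAs
    -- min(ρ Ad, c Ad) ≤ min(ρ,c) * Ad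
    have h1 : min (ρ * Ad) (c * Ad) ≤ min ρ c * Ad := by
      rcases le_or_gt 0 Ad with h | h
      · rcases le_total ρ c with hrc | hrc
        · rw [min_eq_left hrc]; exact min_le_left _ _
        · rw [min_eq_right hrc]; exact min_le_right _ _
      · rcases le_total ρ c with hrc | hrc
        · calc min (ρ * Ad) (c * Ad) ≤ c * Ad := min_le_right _ _
            _ ≤ ρ * Ad := by nlinarith
            _ = min ρ c * Ad := by rw [min_eq_left hrc]
        · calc min (ρ * Ad) (c * Ad) ≤ ρ * Ad := min_le_left _ _
            _ ≤ c * Ad := by nlinarith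
            _ = min ρ c * Ad := by rw [min_eq_right hrc]
    have h2 : min (ρ * As) (c * As) = min ρ c * As := by
      rcases le_total ρ c with hrc | hrc
      · rw [min_eq_left hrc, min_eq_left (by nlinarith : ρ * As ≤ c * As)]
      · rw [min_eq_right hrc, min_eq_right (by nlinarith : c * As ≤ ρ * As)]
    rw [h2]
    have h3 : Ad ≤ As + max (Ad - As) 0 := by
      rcases le_total (Ad - As) 0 with h | h
      · rw [max_eq_right h]; linarith
      · rw [max_eq_left h]; linarith
    calc min (ρ * Ad) (c * Ad) ≤ min ρ c * Ad := h1
      _ ≤ min ρ c * (As + max (Ad - As) 0) := by nlinarith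
      _ = min ρ c * As + min ρ c * max (Ad - As) 0 := by ring
end
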